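/- If (1 − x)/x = c₂(y − 1)/(c₁ y), then the map ξ : 𝔪 → 𝔥 defined by ξ((f₁(K₀) + P₁, −(c₂/c₁) f₂(K₀) + P₂)) = ((1 − x)/x) · (f₁(K₀), f₂(K₀)) (for K₀ ∈ 𝔨, P₁ ∈ 𝔭₁, P₂ ∈ 𝔭₂) is ℝ-linear, is ad(𝔥)-equivariant (ξ(⁅H, X⁆) = ⁅H, ξ(X)⁆ for all H ∈ 𝔥, X ∈ 𝔪), and satisfies ⁅ξ(X) + X, A(X)⁆ = 0 for all X ∈ 𝔪. -/

import Mathlib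

/-- If `(1 − x)/x = c₂(y − 1)/(c₁ y)`, then the map `ξ : 𝔪 → 𝔥` given on
`X = (f₁ K₀ + P₁, −(c₂/c₁)·f₂ K₀ + P₂)` by `ξ(X) = ((1 − x)/x)·(f₁ K₀, f₂ K₀)` is ℝ-linear,
`ad(𝔥)`-equivariant, and satisfies `⁅ξ(X) + X, A X⁆ = 0` for all `X ∈ 𝔪` (brackets in
`𝔤₁ ⊕ 𝔤₂` are taken componentwise; `A` is the identity on `𝔪₀`, `x·id` on `𝔪₁` and
`y·id` on `𝔪₂`). -/
theorem statement7
    {k g1 g2 : Type*}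
    [LieRing k] [LieAlgebra ℝ k] [Module.Finite ℝ k] [LieAlgebra.IsSemisimple ℝ k]
    [LieRing g1] [LieAlgebra ℝ g1] [Module.Finite ℝ g1] [LieAlgebra.IsSemisimple ℝ g1]
    [LieRing g2] [LieAlgebra ℝ g2] [Module.Finite ℝ g2] [LieAlgebra.IsSemisimple ℝ g2]
    (f1 : k →ₗ⁅ℝ⁆ g1) (f2 : k →ₗ⁅ℝ⁆ g2)
    (hf1 : Function.Injective f1) (hf2 : Function.Injective f2)
    (c1 c2 : ℝ) (hc1 : 0 < c1) (hc2 : 0 < c2)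
    (hB1 : ∀ Z W : k, killingForm ℝ k Z W = c1 * killingForm ℝ g1 (f1 Z) (f1 W))
    (hB2 : ∀ Z W : k, killingForm ℝ k Z W = c2 * killingForm ℝ g2 (f2 Z) (f2 W))
    (p1 : Submodule ℝ g1) (hp1 : ∀ P : g1, P ∈ p1 ↔ ∀ Z : k, killingForm ℝ g1 P (f1 Z) = 0)
    (p2 : Submodule ℝ g2) (hp2 : ∀ P : g2, P ∈ p2 ↔ ∀ Z : k, killingForm ℝ g2 P (f2 Z) = 0)
    (hsum1 : ∀ a : g1, ∃ Z : k, a - f1 Z ∈ p1)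
    (hsum2 : ∀ a : g2, ∃ Z : k, a - f2 Z ∈ p2)
    (hint1 : ∀ Z : k, f1 Z ∈ p1 → Z = 0)
    (hint2 : ∀ Z : k, f2 Z ∈ p2 → Z = 0)
    (hlie1 : ∀ Z : k, ∀ P ∈ p1, ⁅f1 Z, P⁆ ∈ p1)
    (hlie2 : ∀ Z : k, ∀ P ∈ p2, ⁅f2 Z, P⁆ ∈ p2)
    (x y : ℝ) (hx : 0 < x) (hy : 0 < y)
    (h : (1 - x) / x = c2 * (y - 1) / (c1 * y)) :
    ∃ ξ : (g1 × g2) →ₗ[ℝ] g1 × g2,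
      (∀ (K0 : k), ∀ P1 ∈ p1, ∀ P2 ∈ p2,
        ξ (f1 K0 + P1, -(c2 / c1) • f2 K0 + P2) = ((1 - x) / x) • (f1 K0, f2 K0)) ∧
      (∀ (W K0 : k), ∀ P1 ∈ p1, ∀ P2 ∈ p2,
        ξ (⁅f1 W, f1 K0 + P1⁆, ⁅f2 W, -(c2 / c1) • f2 K0 + P2⁆) =
          (⁅f1 W, (ξ (f1 K0 + P1, -(c2 / c1) • f2 K0 + P2)).1⁆,
           ⁅f2 W, (ξ (f1 K0 + P1, -(c2 / c1) • f2 K0 + P2)).2⁆)) ∧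
      (∀ (K0 : k), ∀ P1 ∈ p1, ∀ P2 ∈ p2,
        ⁅(ξ (f1 K0 + P1, -(c2 / c1) • f2 K0 + P2)).1 + (f1 K0 + P1),
          f1 K0 + x • P1⁆ = 0 ∧
        ⁅(ξ (f1 K0 + P1, -(c2 / c1) • f2 K0 + P2)).2 + (-(c2 / c1) • f2 K0 + P2),
          -(c2 / c1) • f2 K0 + y • P2⁆ = 0) := by

  classical
  -- projection of g1 onto k along p1
  set F1 : Submodule ℝ g1 := LinearMap.range (f1 : k →ₗ[ℝ] g1) with hF1
  have hdisj : Disjoint F1 p1 := by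
    rw [disjoint_iff]
    ext a
    simp only [Submodule.mem_inf, Submodule.mem_bot]
    constructor
    · rintro ⟨⟨Z, rfl⟩, hp⟩
      rw [hint1 Z hp]; simp
    · rintro rfl
      exact ⟨F1.zero_mem, p1.zero_mem⟩
  have hcod : Codisjoint F1 p1 := by
    rw [codisjoint_iff]
    rw [eq_top_iff]
    intro a _
    obtain ⟨Z, hZ⟩ := hsum1 a
    have : a = f1 Z + (a - f1 Z) := by abel
    rw [this]
    exact Submodule.add_mem_sup ⟨Z, rfl⟩ hZ
  have hcompl : IsCompl F1 p1 := ⟨hdisj, hcod⟩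
  have hf1' : Function.Injective (f1 : k →ₗ[ℝ] g1) := hf1
  let e : k ≃ₗ[ℝ] F1 := LinearEquiv.ofInjective (f1 : k →ₗ[ℝ] g1) hf1'
  let π : g1 →ₗ[ℝ] F1 := F1.projectionOnto p1 hcompl
  let π1 : g1 →ₗ[ℝ] k := e.symm.toLinearMap ∘ₗ π
  have hπ1 : ∀ (Z : k), ∀ P ∈ p1, π1 (f1 Z + P) = Z := by
    intro Z P hP
    have hm : f1 Z ∈ F1 := ⟨Z, rfl⟩
    have h1 : π (f1 Z + P) = ⟨f1 Z, hm⟩ := by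
      rw [map_add]
      rw [Submodule.projectionOnto_apply_right hcompl ⟨P, hP⟩]
      rw [add_zero]
      exact Submodule.projectionOnto_apply_left hcompl ⟨f1 Z, hm⟩
    show e.symm (π (f1 Z + P)) = Z
    rw [h1, LinearEquiv.symm_apply_eq]
    rfl
  set lam : ℝ := (1 - x) / x with hlam
  refine ⟨lam • (((f1 : k →ₗ[ℝ] g1).prod (f2 : k →ₗ[ℝ] g2)).comp
      (π1.comp (LinearMap.fst ℝ g1 g2))), ?_, ?_, ?_⟩
  · intro K0 P1 hP1 P2 hP2
    simp only [LinearMap.smul_apply, LinearMap.comp_apply, LinearMap.fst_apply,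
      LinearMap.prod_apply, Function.prod, LieHom.coe_toLinearMap]
    rw [hπ1 K0 P1 hP1]
  · intro W K0 P1 hP1 P2 hP2
    simp only [LinearMap.smul_apply, LinearMap.comp_apply, LinearMap.fst_apply,
      LinearMap.prod_apply, Function.prod]
    rw [hπ1 K0 P1 hP1]
    have hb : ⁅f1 W, f1 K0 + P1⁆ = f1 ⁅W, K0⁆ + ⁅f1 W, P1⁆ := by
      rw [lie_add, LieHom.map_lie]
    rw [hb, hπ1 ⁅W, K0⁆ _ (hlie1 W P1 hP1)]
    simp only [Prod.smul_mk, Prod.mk.injEq, LieHom.coe_toLinearMap, lie_smul,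
      LieHom.map_lie]
  · intro K0 P1 hP1 P2 hP2
    simp only [LinearMap.smul_apply, LinearMap.comp_apply, LinearMap.fst_apply,
      LinearMap.prod_apply, Function.prod]
    rw [hπ1 K0 P1 hP1]
    have hxy1 : lam * x = 1 - x := div_mul_cancel₀ _ hx.ne'
    have hxy2 : lam * y = c2 / c1 * (y - 1) := by
      rw [h]
      field_simp
    constructor
    · show ⁅lam • f1 K0 + (f1 K0 + P1), f1 K0 + x • P1⁆ = 0
      have hskew : ⁅P1, f1 K0⁆ = -⁅f1 K0, P1⁆ := (lie_skew _ _).symm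
      simp only [add_lie, lie_add, smul_lie, lie_smul, lie_self, smul_zero, zero_add,
        add_zero, hskew, smul_smul]
      match_scalars
      linear_combination hxy1
    · show ⁅lam • f2 K0 + (-(c2 / c1) • f2 K0 + P2), -(c2 / c1) • f2 K0 + y • P2⁆ = 0
      have hskew : ⁅P2, f2 K0⁆ = -⁅f2 K0, P2⁆ := (lie_skew _ _).symm
      simp only [add_lie, lie_add, smul_lie, lie_smul, lie_self, smul_zero, zero_add,
        add_zero, hskew, smul_smul, neg_smul, neg_lie, lie_neg, smul_neg, neg_neg, neg_zero]
      match_scalars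
      linear_combination hxy2
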